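/- Let (S, μ) be an ergodic measure-preserving automorphism of a probability space and V a measurable set with μ(V) > 0, with return time r_V(x) = min{n > 0 : Sⁿx ∈ V}. Then the following are equivalent: (1) limsup_n (μ{x ∈ V : r_V(x) ≥ n})^{1/n} < 1; (2) limsup_n (μ{x : x ∉ ∪_{k=1}^n S^{−k}V})^{1/n} < 1. -/

import Mathlib

open Filter ENNReal MeasureTheory Topology

private lemma aux_exists_geom {u : ℕ → ℝ≥0∞}
    (h : Filter.atTop.limsup (fun n : ℕ => u n ^ (1 / (n : ℝ))) < 1) :
    ∃ r : ℝ≥0∞, 0 < r ∧ r < 1 ∧ ∀ᶠ n in Filter.atTop, u n ≤ r ^ n := by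
  have h2 : max (Filter.atTop.limsup (fun n : ℕ => u n ^ (1 / (n : ℝ)))) 2⁻¹ < 1 :=
    max_lt h (by norm_num)
  obtain ⟨r, hr1, hr2⟩ := exists_between h2
  have hr0 : 0 < r :=
    lt_of_lt_of_le (by norm_num : (0 : ℝ≥0∞) < 2⁻¹) (le_of_lt (lt_of_le_of_lt (le_max_right _ _) hr1))
  have hev := Filter.eventually_lt_of_limsup_lt (lt_of_le_of_lt (le_max_left _ _) hr1)
  refine ⟨r, hr0, hr2, ?_⟩
  filter_upwards [hev, Filter.eventually_ge_atTop 1] with n hn hn1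
  have hne : (n : ℝ) ≠ 0 := Nat.cast_ne_zero.mpr (Nat.one_le_iff_ne_zero.mp hn1)
  have hu : u n = (u n ^ (1 / (n : ℝ))) ^ (n : ℝ) := by
    rw [← ENNReal.rpow_mul, one_div, inv_mul_cancel₀ hne, ENNReal.rpow_one]
  rw [hu, ← ENNReal.rpow_natCast r]
  exact ENNReal.rpow_le_rpow hn.le (Nat.cast_nonneg n)

private lemma aux_limsup_lt {u : ℕ → ℝ≥0∞} {C r : ℝ≥0∞} (hC : C ≠ ∞) (hr : r < 1)
    (h : ∀ᶠ n in Filter.atTop, u n ≤ C * r ^ n) :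
    Filter.atTop.limsup (fun n : ℕ => u n ^ (1 / (n : ℝ))) < 1 := by
  obtain ⟨t, hst, ht1⟩ := exists_between (max_lt hr (by norm_num : (2 : ℝ≥0∞)⁻¹ < 1))
  have ht0 : 0 < t :=
    lt_of_lt_of_le (by norm_num : (0 : ℝ≥0∞) < 2⁻¹) (le_of_lt (lt_of_le_of_lt (le_max_right _ _) hst))
  have htt : t ≠ ∞ := ne_top_of_lt ht1
  have hrt : r < t := lt_of_le_of_lt (le_max_left _ _) hst
  have hdiv : r / t < 1 := by
    rw [ENNReal.div_lt_iff (Or.inl ht0.ne') (Or.inl htt), one_mul]; exact hrt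
  have htend : Filter.Tendsto (fun n : ℕ => C * (r / t) ^ n) Filter.atTop (𝓝 0) := by
    have := ENNReal.Tendsto.const_mul
      (ENNReal.tendsto_pow_atTop_nhds_zero_of_lt_one hdiv) (Or.inr hC)
    simpa using this
  have hev2 : ∀ᶠ n in Filter.atTop, C * (r / t) ^ n ≤ 1 :=
    (htend.eventually_lt_const (by norm_num : (0 : ℝ≥0∞) < 1)).mono fun n hn => hn.le
  have hle : Filter.atTop.limsup (fun n : ℕ => u n ^ (1 / (n : ℝ))) ≤ t := by
    refine Filter.limsup_le_of_le (by isBoundedDefault) ?_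
    filter_upwards [h, hev2, Filter.eventually_ge_atTop 1] with n h1 h2 hn1
    have hne : (n : ℝ) ≠ 0 := Nat.cast_ne_zero.mpr (Nat.one_le_iff_ne_zero.mp hn1)
    have hun : u n ≤ t ^ n := by
      calc u n ≤ C * r ^ n := h1
        _ = C * (r / t) ^ n * t ^ n := by
            rw [mul_assoc, ← mul_pow, ENNReal.div_mul_cancel ht0.ne' htt]
        _ ≤ 1 * t ^ n := mul_le_mul_left h2 _
        _ = t ^ n := one_mul _
    calc u n ^ (1 / (n : ℝ)) ≤ (t ^ n) ^ (1 / (n : ℝ)) :=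
          ENNReal.rpow_le_rpow hun (by positivity)
      _ = t := by
          rw [← ENNReal.rpow_natCast, ← ENNReal.rpow_mul, mul_one_div, div_self hne,
            ENNReal.rpow_one]
  exact lt_of_le_of_lt hle ht1

/-- Remark `exprec`, (1) ⟺ (2): Let `(S, μ)` be an ergodic
measure-preserving automorphism of a probability space and `V` a measurable
set with `μ(V) > 0`, with return time `r_V(x) = min{n > 0 : Sⁿx ∈ V}`.  Then
`V` is exponentially recurrent, i.e.
`limsup_n (μ{x ∈ V : r_V(x) ≥ n})^{1/n} < 1`
(where `r_V(x) ≥ n` means `S^k x ∉ V` for `0 < k < n`), if and only if `V` is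
exponentially filling, i.e.
`limsup_n (μ{x : x ∉ ∪_{k=1}^n S^{−k}V})^{1/n} < 1`. -/
theorem stmt14 {X : Type*} [MeasurableSpace X] (μ : Measure X)
    [IsProbabilityMeasure μ] (S : X → X)
    (hbij : Function.Bijective S) (herg : Ergodic S μ)
    (V : Set X) (hV : MeasurableSet V) (hVpos : 0 < μ V) :
    (Filter.atTop.limsup (fun n : ℕ =>
        (μ {x | x ∈ V ∧ ∀ k, 0 < k → k < n → S^[k] x ∉ V}) ^ (1 / (n : ℝ))) < 1)
    ↔ (Filter.atTop.limsup (fun n : ℕ =>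
        (μ {x | ∀ k, 1 ≤ k → k ≤ n → S^[k] x ∉ V}) ^ (1 / (n : ℝ))) < 1) := by
  have hpres : MeasurePreserving S μ μ := herg.toMeasurePreserving
  have hS : Measurable S := hpres.measurable
  have hSk : ∀ k : ℕ, Measurable (S^[k]) := fun k => hS.iterate k
  set RS : ℕ → Set X := fun n => {x | x ∈ V ∧ ∀ k, 0 < k → k < n → S^[k] x ∉ V} with hRSdef
  set BS : ℕ → Set X := fun n => {x | ∀ k, 1 ≤ k → k ≤ n → S^[k] x ∉ V} with hBSdef
  set W : ℕ → Set X := fun n => {x | ∀ k, k < n → S^[k] x ∉ V} with hWdef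
  set G : ℕ → Set X := fun n =>
    {x | (∀ k, 0 < k → k < n → S^[k] x ∉ V) ∧ S^[n] x ∈ V} with hGdef
  set F : ℕ → Set X := fun n => G n ∩ V with hFdef
  have mV' : MeasurableSet Vᶜ := hV.compl
  -- measurability
  have mRS : ∀ n, MeasurableSet (RS n) := by
    intro n
    have : RS n = V ∩ ⋂ k ∈ Finset.Ioo 0 n, (S^[k]) ⁻¹' Vᶜ := by
      ext x
      simp only [hRSdef, Set.mem_setOf_eq, Set.mem_inter_iff, Set.mem_iInter, Finset.mem_Ioo,
        Set.mem_preimage, Set.mem_compl_iff, and_imp]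
    rw [this]
    exact hV.inter (Finset.measurableSet_biInter _ fun k _ => (hSk k) mV')
  have mW : ∀ n, MeasurableSet (W n) := by
    intro n
    have : W n = ⋂ k ∈ Finset.range n, (S^[k]) ⁻¹' Vᶜ := by
      ext x
      simp only [hWdef, Set.mem_setOf_eq, Set.mem_iInter, Finset.mem_range, Set.mem_preimage,
        Set.mem_compl_iff]
    rw [this]
    exact Finset.measurableSet_biInter _ fun k _ => (hSk k) mV'
  have mG : ∀ n, MeasurableSet (G n) := by
    intro n
    have : G n = (⋂ k ∈ Finset.Ioo 0 n, (S^[k]) ⁻¹' Vᶜ) ∩ (S^[n]) ⁻¹' V := by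
      ext x
      simp only [hGdef, Set.mem_setOf_eq, Set.mem_inter_iff, Set.mem_iInter, Finset.mem_Ioo,
        Set.mem_preimage, Set.mem_compl_iff, and_imp]
    rw [this]
    exact (Finset.measurableSet_biInter _ fun k _ => (hSk k) mV').inter ((hSk n) hV)
  have mF : ∀ n, MeasurableSet (F n) := fun n => (mG n).inter hV
  -- μ (BS n) = μ (W n)
  have hBW : ∀ n, μ (BS n) = μ (W n) := by
    intro n
    have hset : BS n = S ⁻¹' (W n) := by
      ext x
      simp only [hBSdef, hWdef, Set.mem_setOf_eq, Set.mem_preimage]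
      constructor
      · intro h k hk
        have := h (k + 1) (Nat.succ_le_succ (Nat.zero_le _)) hk
        rwa [Function.iterate_succ_apply] at this
      · intro h k hk1 hkn
        obtain ⟨j, rfl⟩ : ∃ j, k = j + 1 := ⟨k - 1, (Nat.succ_pred_eq_of_pos hk1).symm⟩
        rw [Function.iterate_succ_apply]
        exact h j hkn
    rw [hset, hpres.measure_preimage (mW n).nullMeasurableSet]
  -- μ (⋂ n, W n) = 0
  have hA0 : μ (⋂ n, W n) = 0 := by
    have hAiff : ∀ x, x ∈ (⋂ n, W n) ↔ ∀ k, S^[k] x ∉ V := by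
      intro x
      simp only [Set.mem_iInter, hWdef, Set.mem_setOf_eq]
      exact ⟨fun h k => h (k + 1) k (Nat.lt_succ_self k), fun h n k _ => h k⟩
    have hsub : (⋂ n, W n) ⊆ S ⁻¹' (⋂ n, W n) := by
      intro x hx
      rw [Set.mem_preimage, hAiff]
      intro k
      rw [← Function.iterate_succ_apply]
      exact (hAiff x).1 hx (k + 1)
    have mA : MeasurableSet (⋂ n, W n) := MeasurableSet.iInter mW
    rcases herg.ae_empty_or_univ_of_ae_le_preimage mA.nullMeasurableSet hsub.eventuallyLE with
      h0 | h1
    · simpa using measure_congr h0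
    · exfalso
      have h1' : μ (⋂ n, W n) = 1 := by
        have := measure_congr h1
        simpa using this
      have hsubV : (⋂ n, W n) ⊆ Vᶜ := by
        intro x hx
        have := (hAiff x).1 hx 0
        simpa using this
      have hlt : μ Vᶜ < 1 := by
        rw [prob_compl_eq_one_sub hV]
        exact ENNReal.sub_lt_self one_ne_top one_ne_zero hVpos.ne'
      exact absurd (h1' ▸ measure_mono hsubV) hlt.not_ge
  -- tendsto 0
  have htend : Filter.Tendsto (fun n => μ (W n)) Filter.atTop (𝓝 0) := by
    have hanti : Antitone W := fun a b hab x hx k hk => hx k (lt_of_lt_of_le hk hab)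
    have := tendsto_measure_iInter_atTop (fun n => (mW n).nullMeasurableSet) hanti
      ⟨0, measure_ne_top μ _⟩
    rw [hA0] at this
    simpa [Function.comp_def] using this
  -- W recursion
  have hWrec : ∀ m, μ (W m) ≤ μ (G m) + μ (W (m + 1)) := by
    intro m
    have hsub : W m ⊆ G m ∪ W (m + 1) := by
      intro x hx
      by_cases hm : S^[m] x ∈ V
      · exact Or.inl ⟨fun k _ hk => hx k hk, hm⟩
      · refine Or.inr fun k hk => ?_
        rcases Nat.lt_succ_iff_lt_or_eq.mp hk with hk' | rfl
        · exact hx k hk'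
        · exact hm
    exact (measure_mono hsub).trans (measure_union_le _ _)
  -- G recursion
  have hGrec : ∀ m, μ (G m) ≤ μ (F m) + μ (G (m + 1)) := by
    intro m
    have heq : μ (G m) = μ (S ⁻¹' (G m)) :=
      (hpres.measure_preimage (mG m).nullMeasurableSet).symm
    have hsub : S ⁻¹' (G m) ⊆ S ⁻¹' (F m) ∪ G (m + 1) := by
      intro x hx
      rw [Set.mem_preimage] at hx
      obtain ⟨h1, h2⟩ := hx
      by_cases hxv : S x ∈ V
      · exact Or.inl (by rw [Set.mem_preimage]; exact ⟨⟨h1, h2⟩, hxv⟩)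
      · refine Or.inr ⟨?_, ?_⟩
        · intro k hk0 hkm
          obtain ⟨j, rfl⟩ : ∃ j, k = j + 1 := ⟨k - 1, (Nat.succ_pred_eq_of_pos hk0).symm⟩
          rw [Function.iterate_succ_apply]
          rcases Nat.eq_zero_or_pos j with rfl | hj
          · simpa using hxv
          · exact h1 j hj (by omega)
        · rw [Function.iterate_succ_apply]
          exact h2
    calc μ (G m) = μ (S ⁻¹' (G m)) := heq
      _ ≤ μ (S ⁻¹' (F m)) + μ (G (m + 1)) := (measure_mono hsub).trans (measure_union_le _ _)
      _ = μ (F m) + μ (G (m + 1)) := by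
          rw [hpres.measure_preimage (mF m).nullMeasurableSet]
  -- iterated G recursion
  have hGsum : ∀ m N, m ≤ N → μ (G m) ≤ (∑ j ∈ Finset.Ico m N, μ (F j)) + μ (G N) := by
    intro m N
    induction N with
    | zero => intro h; simp [Nat.le_zero.mp h]
    | succ N ih =>
      intro h
      rcases eq_or_lt_of_le h with rfl | h'
      · simp
      · have h'' : m ≤ N := Nat.lt_succ_iff.mp h'
        calc μ (G m) ≤ (∑ j ∈ Finset.Ico m N, μ (F j)) + μ (G N) := ih h''
          _ ≤ (∑ j ∈ Finset.Ico m N, μ (F j)) + (μ (F N) + μ (G (N + 1))) :=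
              add_le_add_right (hGrec N) _
          _ = (∑ j ∈ Finset.Ico m (N + 1), μ (F j)) + μ (G (N + 1)) := by
              rw [Finset.sum_Ico_succ_top h'', add_assoc]
  -- disjointness sum bound
  have hFsum : ∀ n N, 1 ≤ n → (∑ j ∈ Finset.Ico n N, μ (F j)) ≤ μ (RS n) := by
    intro n N hn
    have hd : (↑(Finset.Ico n N) : Set ℕ).PairwiseDisjoint F := by
      intro j hj j' hj' hne
      simp only [Finset.coe_Ico, Set.mem_Ico] at hj hj'
      have key : ∀ a b, n ≤ a → a < b → Disjoint (F a) (F b) := by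
        intro a b ha hab
        rw [Set.disjoint_left]
        intro x hxa hxb
        exact hxb.1.1 a (lt_of_lt_of_le Nat.zero_lt_one (hn.trans ha)) hab hxa.1.2
      rcases hne.lt_or_gt with h | h
      · exact key j j' hj.1 h
      · exact (key j' j hj'.1 h).symm
    have := measure_biUnion_finset (μ := μ) hd fun j _ => mF j
    rw [← this]
    apply measure_mono
    intro x hx
    simp only [Set.mem_iUnion] at hx
    obtain ⟨j, hj, hxj⟩ := hx
    simp only [Finset.mem_Ico] at hj
    exact ⟨hxj.2, fun k hk0 hkn => hxj.1.1 k hk0 (lt_of_lt_of_le hkn hj.1)⟩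
  -- G N+1 ⊆ S⁻¹ W N
  have hGW : ∀ N, μ (G (N + 1)) ≤ μ (W N) := by
    intro N
    have hsub : G (N + 1) ⊆ S ⁻¹' (W N) := by
      intro x hx
      rw [Set.mem_preimage]
      intro j hj
      rw [← Function.iterate_succ_apply]
      exact hx.1 (j + 1) (Nat.succ_pos j) (Nat.succ_lt_succ hj)
    calc μ (G (N + 1)) ≤ μ (S ⁻¹' (W N)) := measure_mono hsub
      _ = μ (W N) := hpres.measure_preimage (mW N).nullMeasurableSet
  -- μ (G m) ≤ μ (RS m) for m ≥ 1
  have hGle : ∀ m, 1 ≤ m → μ (G m) ≤ μ (RS m) := by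
    intro m hm
    have hbound : ∀ᶠ N in Filter.atTop, μ (G m) ≤ μ (RS m) + μ (W N) := by
      filter_upwards [Filter.eventually_ge_atTop m] with N hN
      calc μ (G m) ≤ (∑ j ∈ Finset.Ico m (N + 1), μ (F j)) + μ (G (N + 1)) :=
            hGsum m (N + 1) (hN.trans (Nat.le_succ N))
        _ ≤ μ (RS m) + μ (W N) := add_le_add (hFsum m (N + 1) hm) (hGW N)
    have htend' : Filter.Tendsto (fun N => μ (RS m) + μ (W N)) Filter.atTop
        (𝓝 (μ (RS m) + 0)) := Filter.Tendsto.const_add _ htend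
    have := ge_of_tendsto htend' hbound
    simpa using this
  -- iterated W recursion
  have hWsum : ∀ n N, n ≤ N → μ (W n) ≤ (∑ m ∈ Finset.Ico n N, μ (G m)) + μ (W N) := by
    intro n N
    induction N with
    | zero => intro h; simp [Nat.le_zero.mp h]
    | succ N ih =>
      intro h
      rcases eq_or_lt_of_le h with rfl | h'
      · simp
      · have h'' : n ≤ N := Nat.lt_succ_iff.mp h'
        calc μ (W n) ≤ (∑ m ∈ Finset.Ico n N, μ (G m)) + μ (W N) := ih h''
          _ ≤ (∑ m ∈ Finset.Ico n N, μ (G m)) + (μ (G N) + μ (W (N + 1))) :=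
              add_le_add_right (hWrec N) _
          _ = (∑ m ∈ Finset.Ico n (N + 1), μ (G m)) + μ (W (N + 1)) := by
              rw [Finset.sum_Ico_succ_top h'', add_assoc]
  constructor
  · -- (1) ⇒ (2)
    intro h1
    obtain ⟨r, hr0, hr1, hev⟩ := aux_exists_geom h1
    rw [Filter.eventually_atTop] at hev
    obtain ⟨M, hM⟩ := hev
    have hr1ne : (1 : ℝ≥0∞) - r ≠ 0 := by
      simp only [ne_eq, tsub_eq_zero_iff_le]
      exact hr1.not_ge
    have hgeo : ∀ n N, (∑ m ∈ Finset.Ico n N, r ^ m) ≤ r ^ n * (1 - r)⁻¹ := by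
      intro n N
      calc (∑ m ∈ Finset.Ico n N, r ^ m) = ∑ j ∈ Finset.range (N - n), r ^ (n + j) :=
            by rw [Finset.sum_Ico_eq_sum_range]
        _ = r ^ n * ∑ j ∈ Finset.range (N - n), r ^ j := by
            rw [Finset.mul_sum]; exact Finset.sum_congr rfl fun j _ => pow_add r n j
        _ ≤ r ^ n * (1 - r)⁻¹ := by
            apply mul_le_mul_right
            exact (ENNReal.sum_le_tsum _).trans_eq (ENNReal.tsum_geometric r)
    apply aux_limsup_lt (C := (1 - r)⁻¹) (ENNReal.inv_ne_top.mpr hr1ne) hr1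
    rw [Filter.eventually_atTop]
    refine ⟨max M 1, fun n hn => ?_⟩
    have hnM : M ≤ n := le_trans (le_max_left _ _) hn
    have hn1 : 1 ≤ n := le_trans (le_max_right _ _) hn
    have hbound : ∀ᶠ N in Filter.atTop, μ (W n) ≤ r ^ n * (1 - r)⁻¹ + μ (W N) := by
      filter_upwards [Filter.eventually_ge_atTop n] with N hN
      calc μ (W n) ≤ (∑ m ∈ Finset.Ico n N, μ (G m)) + μ (W N) := hWsum n N hN
        _ ≤ (∑ m ∈ Finset.Ico n N, r ^ m) + μ (W N) := by
            apply add_le_add_left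
            apply Finset.sum_le_sum
            intro m hm
            simp only [Finset.mem_Ico] at hm
            exact (hGle m (hn1.trans hm.1)).trans (hM m (hnM.trans hm.1))
        _ ≤ r ^ n * (1 - r)⁻¹ + μ (W N) := add_le_add_left (hgeo n N) _
    have htend' : Filter.Tendsto (fun N => r ^ n * (1 - r)⁻¹ + μ (W N)) Filter.atTop
        (𝓝 (r ^ n * (1 - r)⁻¹ + 0)) := Filter.Tendsto.const_add _ htend
    have hfin := ge_of_tendsto htend' hbound
    rw [add_zero] at hfin
    calc μ (BS n) = μ (W n) := hBW n
      _ ≤ r ^ n * (1 - r)⁻¹ := hfin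
      _ = (1 - r)⁻¹ * r ^ n := mul_comm _ _
  · -- (2) ⇒ (1)
    intro h2
    obtain ⟨r, hr0, hr1, hev⟩ := aux_exists_geom h2
    rw [Filter.eventually_atTop] at hev
    obtain ⟨M, hM⟩ := hev
    have hrtop : r ≠ ∞ := ne_top_of_lt hr1
    apply aux_limsup_lt (C := r⁻¹) (ENNReal.inv_ne_top.mpr hr0.ne') hr1
    rw [Filter.eventually_atTop]
    refine ⟨M + 1, fun n hn => ?_⟩
    have hn1 : 1 ≤ n := le_trans (Nat.le_add_left 1 M) hn
    have hsubset : RS n ⊆ BS (n - 1) := by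
      intro x hx k hk1 hkn
      exact hx.2 k hk1 (by omega)
    calc μ (RS n) ≤ μ (BS (n - 1)) := measure_mono hsubset
      _ ≤ r ^ (n - 1) := hM (n - 1) (by omega)
      _ = r⁻¹ * r ^ n := by
          conv_rhs => rw [show n = (n - 1) + 1 by omega]
          rw [pow_succ, mul_comm (r ^ (n - 1)) r, ← mul_assoc,
            ENNReal.inv_mul_cancel hr0.ne' hrtop, one_mul]
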